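/- With the notation of the Trimmed form: let Dem be the mould equal to (1 − e^{−λ·m})^{−1} on each one-letter word (m) with m non-resonant and 0 on all other words, and Sem := e^Δ(Exp Dem)·(Exp I)·(Exp(−Dem)). Assume that for every word 𝐦 the sequence r ↦ ([Sem − 1^•]^{(∘r)})^𝐦 is eventually constant, and let Trem := 1^• + limstat_{r→∞}[Sem − 1^•]^{(∘r)}. Then the mould Trem satisfies the fixed-point identities Sem ∘ Trem = Trem and Trem ∘ Sem = Trem. -/

import Mathlib

/- A mould on an alphabet `A` is a function from words (lists) over `A` to `ℂ`. -/
noncomputable section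

abbrev Mould (A : Type*) := List A → ℂ

/-- The unit mould `1^•`: equal to `1` on the empty word and `0` elsewhere. -/
def mone {A : Type*} : Mould A
  | [] => 1
  | _ :: _ => 0

/-- The mould product `(M·N)^𝐚 = Σ_{𝐚¹𝐚²=𝐚} M^{𝐚¹} N^{𝐚²}`. -/
def mprod {A : Type*} (M N : Mould A) : Mould A :=
  fun a => ∑ i ∈ Finset.range (a.length + 1), M (a.take i) * N (a.drop i)

/-- `[M]_{(×n)}`: the `n`-fold mould product of `M` with itself, `[M]_{(×0)} = 1^•`. -/
def mpow {A : Type*} (M : Mould A) : ℕ → Mould A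
  | 0 => mone
  | n + 1 => mprod M (mpow M n)

/-- The mould exponential `Exp M = Σ_{n≥0} [M]_{(×n)}/n!`; on a word `𝐚` the sum is
finite since (for `M^∅ = 0`) the terms with `n > l(𝐚)` vanish. -/
def mExp {A : Type*} (M : Mould A) : Mould A :=
  fun a => ∑ n ∈ Finset.range (a.length + 1), (n.factorial : ℂ)⁻¹ * mpow M n a

/-- The mould logarithm `Log M = Σ_{n≥1} (−1)^{n+1}[M]_{(×n)}/n`; on a word `𝐚` the sum is
finite since (for `M^∅ = 0`) the terms with `n > l(𝐚)` vanish. -/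
def mLog {A : Type*} (M : Mould A) : Mould A :=
  fun a => ∑ n ∈ Finset.Icc 1 a.length, (-1 : ℂ) ^ (n + 1) * (n : ℂ)⁻¹ * mpow M n a
/-- The mould `I^•`: equal to `1` on words of length `1` and `0` elsewhere. -/
def mI {A : Type*} : Mould A
  | [_] => 1
  | _ => 0

/-- Given a weight `ω : A → ℂ` extended additively to words, the operator `e^Δ` on
moulds is `(e^Δ M)^𝐦 = e^{−ω(𝐦)}·M^𝐦`. -/
def eDelta {A : Type*} (ω : A → ℂ) (M : Mould A) : Mould A :=
  fun a => Complex.exp (-(a.map ω).sum) * M a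

/-- The sum `‖𝐚‖ = a_1 + ⋯ + a_r ∈ A` of the letters of a nonempty word
(`none` on the empty word). -/
def blockSum {A : Type*} [Add A] : List A → Option A
  | [] => none
  | x :: t => some (t.foldl (· + ·) x)

/-- Mould composition: `(M∘N)^𝐚 = Σ_k Σ_{𝐚¹⋯𝐚ᵏ=𝐚, 𝐚ⁱ≠∅} M^{‖𝐚¹‖⋯‖𝐚ᵏ‖}·N^{𝐚¹}⋯N^{𝐚ᵏ}`,
the sum ranging over decompositions of `𝐚` into nonempty consecutive blocks
(in particular `(M∘N)^∅ = M^∅`). -/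
def mcomp {A : Type*} [Add A] (M N : Mould A) : Mould A := fun a =>
  ∑ c : Composition a.length,
    M (((a.splitWrtComposition c).map blockSum).reduceOption) *
      ((a.splitWrtComposition c).map N).prod

/-- Iterated self-composition: `iterComp X r = X^{(∘(r+1))}`, i.e.
`X^{(∘1)} = X` and `X^{(∘(r+1))} = X ∘ X^{(∘r)}`. -/
def iterComp {A : Type*} [Add A] (X : Mould A) : ℕ → Mould A
  | 0 => X
  | r + 1 => mcomp X (iterComp X r)

/-- The alphabet `A = {m ∈ ℤ^ν : m_1 + ⋯ + m_ν ≥ 1}`. -/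
def Alpha (ν : ℕ) : Type := {m : Fin ν → ℤ // 1 ≤ ∑ i, m i}

/-- `A` is a semigroup under componentwise addition. -/
instance {ν : ℕ} : Add (Alpha ν) :=
  ⟨fun a b => ⟨a.1 + b.1, by
    have ha := a.2
    have hb := b.2
    simp only [Pi.add_apply, Finset.sum_add_distrib]
    linarith⟩⟩

instance {ν : ℕ} : AddSemigroup (Alpha ν) where
  add_assoc a b c := Subtype.ext (add_assoc a.1 b.1 c.1)

/-- `λ·m = Σ_i λ_i m_i` for a letter `m`. -/
def dot {ν : ℕ} (lam : Fin ν → ℂ) (m : Alpha ν) : ℂ := ∑ i, lam i * (m.1 i : ℂ)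

/-- `‖𝐦‖ = m_1 + ⋯ + m_r ∈ ℤ^ν` for a word `𝐦` over `Alpha ν`. -/
def wnorm {ν : ℕ} (a : List (Alpha ν)) : Fin ν → ℤ := (a.map Subtype.val).sum

open scoped Classical in
/-- The mould `Dem`: equal to `(1 − e^{−λ·m})⁻¹` on one-letter words `(m)` with `m`
non-resonant (i.e. `e^{λ·m} ≠ 1`) and `0` on all other words. -/
def Dem {ν : ℕ} (lam : Fin ν → ℂ) : Mould (Alpha ν) := fun a =>
  match a with
  | [m] => if Complex.exp (dot lam m) = 1 then 0
           else (1 - Complex.exp (-dot lam m))⁻¹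
  | _ => 0

/-- The mould `Sem := e^Δ(Exp Dem)·(Exp I)·(Exp(−Dem))` of the simplified form,
with weight `ω(m) = λ·m`. -/
def Sem {ν : ℕ} (lam : Fin ν → ℂ) : Mould (Alpha ν) :=
  mprod (eDelta (dot lam) (mExp (Dem lam)))
    (mprod (mExp mI) (mExp fun a => -Dem lam a))
/-! ### Auxiliary material for the proof -/

namespace TremAux

open List

variable {A : Type*}

section lists

/-- Splitting a flattened list along the lengths of its pieces gives back the pieces. -/
lemma splitAux_eq (L : List (List A)) :
    splitWrtCompositionAux L.flatten (L.map length) = L := by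
  induction L with
  | nil => rfl
  | cons t L ih =>
    simp only [flatten_cons, map_cons, splitWrtCompositionAux_cons,
      take_left, drop_left, ih]

/-- A split is characterized by flattening together with the lengths of the pieces. -/
lemma split_eq {l : List A} {m : ℕ} {c : Composition m} {L : List (List A)}
    (hf : L.flatten = l) (hb : L.map length = c.blocks) :
    l.splitWrtComposition c = L := by
  show splitWrtCompositionAux l c.blocks = L
  rw [← hb, ← hf, splitAux_eq]

lemma map_length_split' (l : List A) {m : ℕ} (c : Composition m) (h : m ≤ l.length) :
    (l.splitWrtComposition c).map length = c.blocks :=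
  map_length_splitWrtCompositionAux (by rw [c.blocks_sum]; exact h)

lemma flatten_split' (l : List A) {m : ℕ} (c : Composition m) (h : m = l.length) :
    (l.splitWrtComposition c).flatten = l :=
  flatten_splitWrtCompositionAux (by rw [c.blocks_sum, h])

lemma mem_split_ne_nil {l : List A} {m : ℕ} {c : Composition m} (h : m ≤ l.length)
    {t : List A} (ht : t ∈ l.splitWrtComposition c) : t ≠ [] := by
  have h1 : t.length ∈ c.blocks := by
    rw [← map_length_split' l c h]
    exact List.mem_map_of_mem ht
  have h2 := c.one_le_blocks h1
  intro h'
  rw [h'] at h2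
  simp at h2

lemma flatten_flatten' (S : List (List (List A))) :
    S.flatten.flatten = (S.map List.flatten).flatten := by
  induction S with
  | nil => rfl
  | cons t S ih => simp [flatten_append, ih]

lemma ofFn_get_cast {l : List A} {m : ℕ} (h : m = l.length) :
    List.ofFn (fun i : Fin m => l.get (Fin.cast h i)) = l := by
  subst h
  exact List.ofFn_get l

lemma ofFn_getElem_cast {l : List A} {m : ℕ} (h : m = l.length)
    (pf : ∀ i : Fin m, i.1 < l.length) :
    List.ofFn (fun i : Fin m => l[i.1]'(pf i)) = l := by
  subst h
  exact List.ofFn_getElem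

/-- The `i`-th block of a split. -/
def Blk (l : List A) {m : ℕ} (c : Composition m) (i : Fin c.length) : List A :=
  (l.splitWrtComposition c).get (Fin.cast (length_splitWrtComposition l c).symm i)

lemma ofFn_Blk (l : List A) {m : ℕ} (c : Composition m) :
    List.ofFn (Blk l c) = l.splitWrtComposition c :=
  ofFn_get_cast _

lemma Blk_mem (l : List A) {m : ℕ} (c : Composition m) (i : Fin c.length) :
    Blk l c i ∈ l.splitWrtComposition c := List.get_mem _ _

lemma length_Blk {l : List A} {m : ℕ} {c : Composition m} (h : m ≤ l.length)
    (i : Fin c.length) : (Blk l c i).length = c.blocksFun i := by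
  have h1 : (Blk l c i).length
      = ((l.splitWrtComposition c).map length)[i.1]'(by
          simp only [length_map, length_splitWrtComposition]; exact i.2) := by
    simp [Blk, List.getElem_map]
  rw [List.getElem_of_eq (map_length_split' l c h)] at h1
  exact h1

end lists

section wred

variable [Add A]

/-- The list of block sums. -/
def Wred (L : List (List A)) : List A := (L.map blockSum).reduceOption

lemma blockSum_cons (x : A) (t : List A) :
    blockSum (x :: t) = some (t.foldl (· + ·) x) := rfl

lemma blockSum_ne {l : List A} (h : l ≠ []) : ∃ s, blockSum l = some s := by
  cases l with
  | nil => exact absurd rfl h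
  | cons x t => exact ⟨_, rfl⟩

lemma Wred_nil : Wred ([] : List (List A)) = [] := rfl

lemma Wred_cons (x : A) (t : List A) (L : List (List A)) :
    Wred ((x :: t) :: L) = (t.foldl (· + ·) x) :: Wred L := by
  simp [Wred, blockSum_cons]

lemma Wred_append (L₁ L₂ : List (List A)) :
    Wred (L₁ ++ L₂) = Wred L₁ ++ Wred L₂ := by
  simp [Wred, List.reduceOption_append]

lemma Wred_flatten (S : List (List (List A))) :
    Wred S.flatten = (S.map Wred).flatten := by
  induction S with
  | nil => rfl
  | cons t S ih => simp [flatten_cons, Wred_append, ih]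

lemma length_Wred {L : List (List A)} (h : ∀ l ∈ L, l ≠ []) :
    (Wred L).length = L.length := by
  induction L with
  | nil => rfl
  | cons t L ih =>
    cases t with
    | nil => exact absurd rfl (h [] (mem_cons_self))
    | cons x u =>
      rw [Wred_cons, length_cons, length_cons, ih (fun l hl => h l (mem_cons_of_mem _ hl))]

end wred

section semigroup

variable [AddSemigroup A]

lemma foldl_add_assoc (l : List A) (x y : A) :
    l.foldl (· + ·) (x + y) = x + l.foldl (· + ·) y := by
  induction l generalizing y with
  | nil => rfl
  | cons z l ih =>
    simp only [List.foldl_cons]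
    rw [add_assoc, ih]

lemma blockSum_append {l₁ l₂ : List A} {s₁ s₂ : A}
    (e₁ : blockSum l₁ = some s₁) (e₂ : blockSum l₂ = some s₂) :
    blockSum (l₁ ++ l₂) = some (s₁ + s₂) := by
  cases l₁ with
  | nil => exact absurd e₁ (by simp [blockSum])
  | cons x t =>
    cases l₂ with
    | nil => exact absurd e₂ (by simp [blockSum])
    | cons y u =>
      rw [blockSum_cons] at e₁ e₂
      rw [Option.some_inj] at e₁ e₂
      show blockSum (x :: (t ++ y :: u)) = _
      rw [blockSum_cons, List.foldl_append, List.foldl_cons, ← e₁, foldl_add_assoc, ← e₂]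

lemma blockSum_Wred {L : List (List A)} (hL : L ≠ []) (h : ∀ l ∈ L, l ≠ []) :
    blockSum (Wred L) = blockSum L.flatten := by
  induction L with
  | nil => exact absurd rfl hL
  | cons t L ih =>
    have ht : t ≠ [] := h t (mem_cons_self)
    cases t with
    | nil => exact absurd rfl ht
    | cons x u =>
      rw [Wred_cons, flatten_cons]
      cases L with
      | nil => simp [Wred_nil, blockSum_cons]
      | cons t' L' =>
        have hne : ∀ l ∈ t' :: L', l ≠ [] := fun l hl => h l (mem_cons_of_mem _ hl)
        have hfl : (t' :: L').flatten ≠ [] := by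
          have := hne t' (mem_cons_self)
          cases t' with
          | nil => exact absurd rfl this
          | cons z w => simp
        obtain ⟨s₂, hs₂⟩ := blockSum_ne hfl
        have hwr : Wred (t' :: L') ≠ [] := by
          have hlen : (Wred (t' :: L')).length = (t' :: L').length := length_Wred hne
          intro h'
          rw [h'] at hlen
          simp at hlen
        obtain ⟨s₁, hs₁⟩ := blockSum_ne hwr
        have ihe : blockSum (Wred (t' :: L')) = blockSum (t' :: L').flatten :=
          ih (by simp) hne
        rw [hs₁, hs₂] at ihe
        rw [Option.some_inj] at ihe
        have h1 : blockSum ((u.foldl (· + ·) x) :: Wred (t' :: L'))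
            = some (u.foldl (· + ·) x + s₁) := by
          have : blockSum [u.foldl (· + ·) x] = some (u.foldl (· + ·) x) := rfl
          have happ := blockSum_append this hs₁
          simpa using happ
        have h2 : blockSum ((x :: u) ++ (t' :: L').flatten)
            = some (u.foldl (· + ·) x + s₂) :=
          blockSum_append (blockSum_cons x u) hs₂
        rw [h1, h2, ihe]

/-- The word of block sums of a split. -/
def sW (w : List A) {m : ℕ} (c : Composition m) : List A :=
  Wred (w.splitWrtComposition c)

lemma length_sW {w : List A} {m : ℕ} {c : Composition m} (h : m ≤ w.length) :
    (sW w c).length = c.length := by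
  rw [sW, length_Wred (fun l hl => mem_split_ne_nil h hl), length_splitWrtComposition]

end semigroup

end TremAux
namespace TremAux

open List

variable {A : Type*} [AddSemigroup A]

section keys

variable (a : List A) (c : Composition a.length) (d : Composition c.length)

omit [AddSemigroup A] in
lemma blocks_sigmaCompositionAux (i : Fin (c.gather d).length) :
    (c.sigmaCompositionAux d i).blocks
      = (c.blocks.splitWrtComposition d)[i.1]'(by
          rw [length_splitWrtComposition, ← Composition.length_gather]; exact i.2) := rfl

omit [AddSemigroup A] in
lemma length_Blk_gather (i : Fin (c.gather d).length) :
    (Blk a (c.gather d) i).length = (c.gather d).blocksFun i :=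
  length_Blk le_rfl i

omit [AddSemigroup A] in
/-- Key decomposition: the blocks of `c` are obtained by splitting each block of
`c.gather d` along the corresponding subcomposition. -/
lemma key1 :
    a.splitWrtComposition c
      = (List.ofFn fun i : Fin (c.gather d).length =>
          (Blk a (c.gather d) i).splitWrtComposition (c.sigmaCompositionAux d i)).flatten := by
  apply split_eq
  · -- flatten = a
    rw [flatten_flatten', map_ofFn]
    have h1 : (List.flatten ∘ fun i : Fin (c.gather d).length =>
        (Blk a (c.gather d) i).splitWrtComposition (c.sigmaCompositionAux d i))
        = Blk a (c.gather d) := by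
      funext i
      exact flatten_split' _ _ (length_Blk_gather a c d i).symm
    rw [h1, ofFn_Blk, flatten_split' _ _ rfl]
  · -- lengths = c.blocks
    rw [map_flatten, map_ofFn]
    have h1 : (map length ∘ fun i : Fin (c.gather d).length =>
        (Blk a (c.gather d) i).splitWrtComposition (c.sigmaCompositionAux d i))
        = fun i : Fin (c.gather d).length => (c.sigmaCompositionAux d i).blocks := by
      funext i
      exact map_length_split' _ _ (le_of_eq (length_Blk_gather a c d i).symm)
    rw [h1]
    have h2 : (fun i : Fin (c.gather d).length => (c.sigmaCompositionAux d i).blocks)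
        = fun i : Fin (c.gather d).length =>
            (c.blocks.splitWrtComposition d)[i.1]'(by
              rw [length_splitWrtComposition, ← Composition.length_gather]; exact i.2) := by
      funext i
      exact blocks_sigmaCompositionAux a c d i
    rw [h2, ofFn_getElem_cast (by rw [length_splitWrtComposition, ← Composition.length_gather]),
      flatten_split' _ _ c.blocks_length.symm]

lemma key2 :
    (sW a c).splitWrtComposition d
      = List.ofFn fun i : Fin (c.gather d).length =>
          sW (Blk a (c.gather d) i) (c.sigmaCompositionAux d i) := by
  apply split_eq
  · -- flatten = sW a c
    calc (List.ofFn fun i : Fin (c.gather d).length =>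
            sW (Blk a (c.gather d) i) (c.sigmaCompositionAux d i)).flatten
        = ((List.ofFn fun i : Fin (c.gather d).length =>
            (Blk a (c.gather d) i).splitWrtComposition
              (c.sigmaCompositionAux d i)).map Wred).flatten := by
          rw [map_ofFn]; rfl
      _ = Wred (List.ofFn fun i : Fin (c.gather d).length =>
            (Blk a (c.gather d) i).splitWrtComposition
              (c.sigmaCompositionAux d i)).flatten := (Wred_flatten _).symm
      _ = Wred (a.splitWrtComposition c) := by rw [← key1]
      _ = sW a c := rfl
  · -- lengths = d.blocks
    have pf : ∀ i : Fin (c.gather d).length, i.1 < d.blocks.length := fun i => by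
      rw [Composition.blocks_length]; exact (Composition.length_gather c d) ▸ i.2
    have hlen : ∀ i : Fin (c.gather d).length,
        (sW (Blk a (c.gather d) i) (c.sigmaCompositionAux d i)).length
          = d.blocks[i.1]'(pf i) := by
      intro i
      rw [length_sW (le_of_eq (length_Blk_gather a c d i).symm)]
      have h3 : (c.sigmaCompositionAux d i).length
          = (c.sigmaCompositionAux d i).blocks.length :=
        (Composition.blocks_length _).symm
      rw [h3, blocks_sigmaCompositionAux a c d i]
      rw [← List.getElem_map (f := length),
        List.getElem_of_eq (map_length_split' c.blocks d (le_of_eq c.blocks_length.symm))]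
      rw [length_map, length_splitWrtComposition, ← Composition.length_gather c d]
      exact i.2
    rw [map_ofFn]
    have h4 : (length ∘ fun i : Fin (c.gather d).length =>
        sW (Blk a (c.gather d) i) (c.sigmaCompositionAux d i))
        = fun i : Fin (c.gather d).length => d.blocks[i.1]'(pf i) := funext hlen
    rw [h4, ofFn_getElem_cast (by rw [Composition.blocks_length, Composition.length_gather])]

lemma key3 : sW (sW a c) d = sW a (c.gather d) := by
  show Wred ((sW a c).splitWrtComposition d) = _
  rw [key2]
  show ((List.ofFn _).map blockSum).reduceOption = _
  rw [map_ofFn]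
  have h1 : (blockSum ∘ fun i : Fin (c.gather d).length =>
      sW (Blk a (c.gather d) i) (c.sigmaCompositionAux d i))
      = blockSum ∘ Blk a (c.gather d) := by
    funext i
    show blockSum (Wred ((Blk a (c.gather d) i).splitWrtComposition
      (c.sigmaCompositionAux d i))) = _
    have hne : ∀ l ∈ (Blk a (c.gather d) i).splitWrtComposition
        (c.sigmaCompositionAux d i), l ≠ [] :=
      fun l hl => mem_split_ne_nil (le_of_eq (length_Blk_gather a c d i).symm) hl
    have hLne : (Blk a (c.gather d) i).splitWrtComposition
        (c.sigmaCompositionAux d i) ≠ [] := by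
      have hl : ((Blk a (c.gather d) i).splitWrtComposition
          (c.sigmaCompositionAux d i)).length = (c.sigmaCompositionAux d i).length :=
        length_splitWrtComposition _ _
      have hpos : 0 < (c.sigmaCompositionAux d i).length :=
        Composition.length_pos_of_pos _ ((c.gather d).one_le_blocksFun i)
      intro h'
      rw [h'] at hl
      simp only [length_nil] at hl
      omega
    rw [blockSum_Wred hLne hne,
      flatten_split' _ _ (length_Blk_gather a c d i).symm]
    rfl
  rw [h1, ← map_ofFn, ofFn_Blk]
  rfl

end keys

end TremAux
namespace TremAux

open List

variable {A : Type*} [AddSemigroup A]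

omit [AddSemigroup A] in
lemma split_blocks_congr (l : List A) {m k : ℕ} {c₁ : Composition m} {c₂ : Composition k}
    (h : c₁.blocks = c₂.blocks) :
    l.splitWrtComposition c₁ = l.splitWrtComposition c₂ := by
  show splitWrtCompositionAux l c₁.blocks = splitWrtCompositionAux l c₂.blocks
  rw [h]

lemma sW_congr (l : List A) {m k : ℕ} {c₁ : Composition m} {c₂ : Composition k}
    (h : c₁.blocks = c₂.blocks) : sW l c₁ = sW l c₂ :=
  congrArg Wred (split_blocks_congr l h)

omit [AddSemigroup A] in
lemma sum_composition_cast {m k : ℕ} (h : m = k) (f : Composition m → ℂ)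
    (f' : Composition k → ℂ)
    (hf : ∀ (x : Composition m) (y : Composition k), x.blocks = y.blocks → f x = f' y) :
    ∑ x : Composition m, f x = ∑ y : Composition k, f' y := by
  subst h
  exact Finset.sum_congr rfl fun x _ => hf x x rfl

omit [AddSemigroup A] in
lemma prod_map_split (l : List A) {m : ℕ} (c : Composition m) (Q : List A → ℂ) :
    ((l.splitWrtComposition c).map Q).prod = ∏ i : Fin c.length, Q (Blk l c i) := by
  rw [← ofFn_Blk l c, map_ofFn, prod_ofFn]
  rfl

theorem mcomp_assoc (M N P : Mould A) :
    mcomp (mcomp M N) P = mcomp M (mcomp N P) := by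
  funext a
  have key :
      ∀ q : (Σ c : Composition a.length, ∀ i : Fin c.length, Composition (c.blocksFun i)), ℂ :=
    fun q => 0
  calc mcomp (mcomp M N) P a
      = ∑ c : Composition a.length,
          mcomp M N (sW a c) * ((a.splitWrtComposition c).map P).prod := rfl
    _ = ∑ c : Composition a.length, (∑ d : Composition c.length,
          M (sW (sW a c) d) * (((sW a c).splitWrtComposition d).map N).prod)
          * ((a.splitWrtComposition c).map P).prod := by
        refine Finset.sum_congr rfl fun c _ => ?_
        congr 1
        show (∑ d : Composition (sW a c).length,
            M (sW (sW a c) d) * (((sW a c).splitWrtComposition d).map N).prod) = _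
        exact sum_composition_cast (length_sW le_rfl) _ _ (fun x y hxy => by
          rw [sW_congr _ hxy, split_blocks_congr _ hxy])
    _ = ∑ c : Composition a.length, ∑ d : Composition c.length,
          M (sW (sW a c) d) * (((sW a c).splitWrtComposition d).map N).prod
          * ((a.splitWrtComposition c).map P).prod := by
        refine Finset.sum_congr rfl fun c _ => ?_
        rw [Finset.sum_mul]
    _ = ∑ p : (Σ c : Composition a.length, Composition c.length),
          M (sW (sW a p.1) p.2) * (((sW a p.1).splitWrtComposition p.2).map N).prod
          * ((a.splitWrtComposition p.1).map P).prod := by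
        rw [← Finset.univ_sigma_univ, Finset.sum_sigma]
    _ = ∑ q : (Σ c : Composition a.length, ∀ i : Fin c.length, Composition (c.blocksFun i)),
          M (sW a q.1) * ∏ i : Fin q.1.length,
            (N (sW (Blk a q.1 i) (q.2 i)) *
              (((Blk a q.1 i).splitWrtComposition (q.2 i)).map P).prod) := by
        rw [← Equiv.sum_comp (Composition.sigmaEquivSigmaPi a.length)]
        refine Finset.sum_congr rfl fun p _ => ?_
        obtain ⟨c, d⟩ := p
        show M (sW (sW a c) d) * (((sW a c).splitWrtComposition d).map N).prod
            * ((a.splitWrtComposition c).map P).prod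
          = M (sW a (c.gather d)) * ∏ i : Fin (c.gather d).length,
              (N (sW (Blk a (c.gather d) i) (c.sigmaCompositionAux d i)) *
                (((Blk a (c.gather d) i).splitWrtComposition
                  (c.sigmaCompositionAux d i)).map P).prod)
        rw [key3 a c d, key2 a c d, key1 a c d]
        rw [map_ofFn, prod_ofFn]
        rw [map_flatten, map_ofFn, prod_flatten, map_ofFn, prod_ofFn]
        rw [mul_assoc, ← Finset.prod_mul_distrib]
        rfl
    _ = ∑ c : Composition a.length, ∑ φ : (∀ i : Fin c.length, Composition (c.blocksFun i)),
          M (sW a c) * ∏ i : Fin c.length,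
            (N (sW (Blk a c i) (φ i)) *
              (((Blk a c i).splitWrtComposition (φ i)).map P).prod) := by
        rw [← Finset.univ_sigma_univ, Finset.sum_sigma]
    _ = ∑ c : Composition a.length,
          M (sW a c) * ∏ i : Fin c.length, (∑ f : Composition (c.blocksFun i),
            N (sW (Blk a c i) f) * (((Blk a c i).splitWrtComposition f).map P).prod) := by
        refine Finset.sum_congr rfl fun c _ => ?_
        rw [Finset.prod_univ_sum, ← Finset.mul_sum, Fintype.piFinset_univ]
    _ = ∑ c : Composition a.length,
          M (sW a c) * ∏ i : Fin c.length, mcomp N P (Blk a c i) := by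
        refine Finset.sum_congr rfl fun c _ => ?_
        congr 1
        refine Finset.prod_congr rfl fun i _ => ?_
        exact (sum_composition_cast (length_Blk le_rfl i)
          (fun f : Composition (Blk a c i).length =>
            N (sW (Blk a c i) f) * (((Blk a c i).splitWrtComposition f).map P).prod)
          (fun f : Composition (c.blocksFun i) =>
            N (sW (Blk a c i) f) * (((Blk a c i).splitWrtComposition f).map P).prod)
          (fun x y hxy => by
            rw [sW_congr _ hxy, split_blocks_congr _ hxy])).symm
    _ = mcomp M (mcomp N P) a := by
        refine Finset.sum_congr rfl fun c _ => ?_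
        rw [prod_map_split a c (mcomp N P)]
        rfl

end TremAux
namespace TremAux

open List

variable {A : Type*}

lemma mone_ne_nil {l : List A} (h : l ≠ []) : mone l = 0 := by
  cases l with
  | nil => exact absurd rfl h
  | cons x t => rfl

lemma comp_zero_blocks (c : Composition 0) : c.blocks = [] := by
  cases hb : c.blocks with
  | nil => rfl
  | cons u v =>
    have h1 : 1 ≤ u := c.one_le_blocks (hb ▸ List.mem_cons_self)
    have h2 := c.blocks_sum
    rw [hb] at h2
    simp only [sum_cons] at h2
    have h3 : 0 ≤ v.sum := Nat.zero_le _
    omega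

lemma mcomp_nil [Add A] (M N : Mould A) : mcomp M N [] = M [] := by
  have h1 : ∀ c : Composition (0:ℕ), ([] : List A).splitWrtComposition c = [] := fun c => by
    show splitWrtCompositionAux [] c.blocks = []
    rw [comp_zero_blocks c]
    rfl
  calc mcomp M N []
      = ∑ c : Composition 0,
          M (((([]:List A).splitWrtComposition c).map blockSum).reduceOption)
            * ((([]:List A).splitWrtComposition c).map N).prod := rfl
    _ = ∑ _c : Composition 0, M [] := Finset.sum_congr rfl fun c _ => by
          rw [h1 c]; simp
    _ = M [] := by
          rw [Finset.sum_const, Finset.card_univ, composition_card]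
          norm_num

lemma iterComp_nil [Add A] (X : Mould A) (r : ℕ) : iterComp X r [] = X [] := by
  cases r with
  | zero => rfl
  | succ r => exact mcomp_nil _ _

lemma iterComp_comm [AddSemigroup A] (X : Mould A) (r : ℕ) :
    mcomp (iterComp X r) X = iterComp X (r + 1) := by
  induction r with
  | zero => rfl
  | succ r ih =>
    show mcomp (mcomp X (iterComp X r)) X = mcomp X (iterComp X (r + 1))
    rw [mcomp_assoc, ih]

lemma eventually_list {α : Type*} {p : α → ℕ → Prop}
    (h : ∀ w, ∃ R, ∀ r, R ≤ r → p w r) (ws : List α) :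
    ∃ R, ∀ r, R ≤ r → ∀ w ∈ ws, p w r := by
  induction ws with
  | nil => exact ⟨0, by simp⟩
  | cons w ws ih =>
    obtain ⟨R1, h1⟩ := h w
    obtain ⟨R2, h2⟩ := ih
    refine ⟨max R1 R2, fun r hr v hv => ?_⟩
    rcases List.mem_cons.mp hv with rfl | hv'
    · exact h1 r (le_trans (le_max_left _ _) hr)
    · exact h2 r (le_trans (le_max_right _ _) hr) v hv'

lemma sW_ne_nil [AddSemigroup A] {w : List A} {m : ℕ} {c : Composition m}
    (h : m ≤ w.length) (hm : 0 < c.length) : sW w c ≠ [] := by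
  intro h'
  have h2 := length_sW (w := w) (c := c) h
  rw [h'] at h2
  simp only [length_nil] at h2
  omega

theorem fixed_point_general [AddSemigroup A] (S T X : Mould A)
    (hSX : ∀ b, X b = S b - mone b)
    (hT : ∀ a : List A, ∃ R : ℕ, ∀ r : ℕ, R ≤ r → T a = mone a + iterComp X r a) :
    mcomp S T = T ∧ mcomp T S = T := by
  have hXb : ∀ b : List A, b ≠ [] → S b = X b := fun b hb => by
    rw [hSX b, mone_ne_nil hb, sub_zero]
  constructor
  · funext a
    cases a with
    | nil =>
      rw [mcomp_nil]
      obtain ⟨R, hR⟩ := hT []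
      rw [hR R le_rfl, iterComp_nil, hSX]
      ring
    | cons x t =>
      have hpos : 0 < (x :: t).length := by simp
      obtain ⟨R, hR⟩ := eventually_list hT
        ((x :: t) :: (Finset.univ.toList.flatMap
          fun c : Composition (x :: t).length => (x :: t).splitWrtComposition c))
      have hblock : ∀ (c : Composition (x :: t).length),
          ∀ b ∈ (x :: t).splitWrtComposition c,
          T b = mone b + iterComp X R b := fun c b hb =>
        hR R le_rfl b (List.mem_cons_of_mem _ (List.mem_flatMap.mpr
          ⟨c, Finset.mem_toList.mpr (Finset.mem_univ c), hb⟩))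
      have ha' : T (x :: t) = mone (x :: t) + iterComp X (R + 1) (x :: t) :=
        hR (R + 1) (Nat.le_succ _) _ (List.mem_cons_self)
      calc mcomp S T (x :: t)
          = ∑ c : Composition (x :: t).length,
              S (sW (x :: t) c) * (((x :: t).splitWrtComposition c).map T).prod := rfl
        _ = ∑ c : Composition (x :: t).length,
              X (sW (x :: t) c)
                * (((x :: t).splitWrtComposition c).map (iterComp X R)).prod := by
            refine Finset.sum_congr rfl fun c _ => ?_
            rw [hXb _ (sW_ne_nil le_rfl (Composition.length_pos_of_pos c hpos))]
            congr 1
            refine congrArg List.prod (List.map_congr_left fun b hb => ?_)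
            rw [hblock c b hb, mone_ne_nil (mem_split_ne_nil le_rfl hb), zero_add]
        _ = iterComp X (R + 1) (x :: t) := rfl
        _ = T (x :: t) := by
            rw [ha']
            rw [show mone (x :: t) = (0 : ℂ) from rfl, zero_add]
  · funext a
    cases a with
    | nil => exact mcomp_nil _ _
    | cons x t =>
      have hpos : 0 < (x :: t).length := by simp
      obtain ⟨R, hR⟩ := eventually_list hT
        ((x :: t) :: (Finset.univ.toList.map
          fun c : Composition (x :: t).length => sW (x :: t) c))
      have hsw : ∀ c : Composition (x :: t).length,
          T (sW (x :: t) c) = mone (sW (x :: t) c) + iterComp X R (sW (x :: t) c) :=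
        fun c => hR R le_rfl _ (List.mem_cons_of_mem _ (List.mem_map.mpr
          ⟨c, Finset.mem_toList.mpr (Finset.mem_univ c), rfl⟩))
      have ha' : T (x :: t) = mone (x :: t) + iterComp X (R + 1) (x :: t) :=
        hR (R + 1) (Nat.le_succ _) _ (List.mem_cons_self)
      calc mcomp T S (x :: t)
          = ∑ c : Composition (x :: t).length,
              T (sW (x :: t) c) * (((x :: t).splitWrtComposition c).map S).prod := rfl
        _ = ∑ c : Composition (x :: t).length,
              iterComp X R (sW (x :: t) c)
                * (((x :: t).splitWrtComposition c).map X).prod := by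
            refine Finset.sum_congr rfl fun c _ => ?_
            rw [hsw c,
              mone_ne_nil (sW_ne_nil le_rfl (Composition.length_pos_of_pos c hpos)),
              zero_add]
            congr 1
            refine congrArg List.prod (List.map_congr_left fun b hb => ?_)
            exact hXb b (mem_split_ne_nil le_rfl hb)
        _ = mcomp (iterComp X R) X (x :: t) := rfl
        _ = iterComp X (R + 1) (x :: t) := by rw [iterComp_comm]
        _ = T (x :: t) := by
            rw [ha']
            rw [show mone (x :: t) = (0 : ℂ) from rfl, zero_add]

end TremAux
/-- Assuming the sequence of iterated self-compositions of `Sem − 1^•` is eventually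
constant on every word, the mould `Trem := 1^• + limstat_{r→∞}[Sem − 1^•]^{(∘r)}`
satisfies the fixed-point identities `Sem ∘ Trem = Trem` and `Trem ∘ Sem = Trem`. -/
theorem trem_fixed_point {ν : ℕ} (hν : 1 ≤ ν) (lam : Fin ν → ℂ)
    (Trem : Mould (Alpha ν))
    (hTrem : ∀ a : List (Alpha ν), ∃ R : ℕ, ∀ r : ℕ, R ≤ r →
        Trem a = mone a + iterComp (fun b => Sem lam b - mone b) r a) :
    mcomp (Sem lam) Trem = Trem ∧ mcomp Trem (Sem lam) = Trem := by
  exact TremAux.fixed_point_general (Sem lam) Trem (fun b => Sem lam b - mone b)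
    (fun _ => rfl) hTrem

end
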